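/- Fix w_max > 0 and ρ > 0. For every initial configuration (p, θ₀) ∈ ℝ² × ℝ and every target point q ∈ ℝ², the minimum travel time of a differential-drive robot satisfies τ_DD((p, θ₀), q) ≤ ‖p − q‖ / w_max + π ρ / (2 w_max); i.e., there exist admissible controls steering the robot from (p, θ₀) to position q within that time. -/

import Mathlib

open MeasureTheory Filter Topology Real

noncomputable section

/-- The plane `ℝ²` with the Euclidean norm. -/
abbrev Plane : Type := EuclideanSpace ℝ (Fin 2)

/-- A differential-drive (DD) trajectory with wheel-speed bound `wmax` and half-axle
length `ρ`: coordinates `x y θ` driven by measurable wheel-speed controls `wl, wr`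
bounded by `wmax`, satisfying (in integral form) `x' = (wl+wr)/2 ⬝ cos θ`,
`y' = (wl+wr)/2 ⬝ sin θ`, `θ' = (wr - wl)/(2ρ)`. -/
def IsDDTraj (wmax ρ : ℝ) (x y θ : ℝ → ℝ) : Prop :=
  ∃ wl wr : ℝ → ℝ, Measurable wl ∧ Measurable wr ∧
    (∀ t, |wl t| ≤ wmax) ∧ (∀ t, |wr t| ≤ wmax) ∧
    (∀ t, x t = x 0 + ∫ s in (0:ℝ)..t, (wl s + wr s) / 2 * Real.cos (θ s)) ∧
    (∀ t, y t = y 0 + ∫ s in (0:ℝ)..t, (wl s + wr s) / 2 * Real.sin (θ s)) ∧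
    (∀ t, θ t = θ 0 + ∫ s in (0:ℝ)..t, (wr s - wl s) / (2 * ρ))

/-- Minimum travel time of a DD robot from configuration `(p, θ₀)` to the point `q`. -/
def tauDD (wmax ρ : ℝ) (p : Plane) (θ₀ : ℝ) (q : Plane) : ℝ :=
  sInf {T : ℝ | 0 ≤ T ∧ ∃ x y θ : ℝ → ℝ, IsDDTraj wmax ρ x y θ ∧
    x 0 = p 0 ∧ y 0 = p 1 ∧ θ 0 = θ₀ ∧ x T = q 0 ∧ y T = q 1}

/-- Reachable set at time `t` of a DD robot starting at configuration `(p, θ₀)`. -/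
def reachDD (wmax ρ : ℝ) (p : Plane) (θ₀ : ℝ) (t : ℝ) : Set Plane :=
  {q | tauDD wmax ρ p θ₀ q ≤ t}

lemma stepIntegrable (c a b u v : ℝ) :
    IntervalIntegrable (fun s => if s < c then a else b) volume u v := by
  apply MeasureTheory.IntegrableOn.intervalIntegrable
  apply Measure.integrableOn_of_bounded (M := max |a| |b|)
  · exact (measure_Icc_lt_top).ne
  · exact ((measurable_const.ite measurableSet_Iio measurable_const)).aestronglyMeasurable
  · filter_upwards with s
    by_cases h : s < c <;> simp [h, Real.norm_eq_abs, le_max_left, le_max_right]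

lemma ae_ne_real (c : ℝ) : ∀ᵐ s : ℝ, s ≠ c := by
  rw [MeasureTheory.ae_iff]
  simp

lemma integral_step (c a b t : ℝ) (hc : 0 ≤ c) :
    (∫ s in (0:ℝ)..t, if s < c then a else b) = a * min t c + b * (t - min t c) := by
  rcases le_or_gt t c with h | h
  · rw [min_eq_left h]
    have : (∫ s in (0:ℝ)..t, if s < c then a else b) = ∫ _ in (0:ℝ)..t, a := by
      apply intervalIntegral.integral_congr_ae
      filter_upwards [ae_ne_real c] with s hs hmem
      have : s ≤ c := by
        rcases le_total 0 t with h0 | h0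
        · rw [Set.uIoc_of_le h0] at hmem; exact hmem.2.trans h
        · rw [Set.uIoc_of_ge h0] at hmem; exact hmem.2.trans hc
      rw [if_pos (lt_of_le_of_ne this hs)]
    rw [this, intervalIntegral.integral_const, smul_eq_mul]
    ring
  · rw [min_eq_right h.le]
    rw [← intervalIntegral.integral_add_adjacent_intervals (stepIntegrable c a b 0 c)
      (stepIntegrable c a b c t)]
    have h1 : (∫ s in (0:ℝ)..c, if s < c then a else b) = ∫ _ in (0:ℝ)..c, a := by
      apply intervalIntegral.integral_congr_ae
      filter_upwards [ae_ne_real c] with s hs hmem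
      rw [Set.uIoc_of_le hc] at hmem
      rw [if_pos (lt_of_le_of_ne hmem.2 hs)]
    have h2 : (∫ s in c..t, if s < c then a else b) = ∫ _ in c..t, b := by
      apply intervalIntegral.integral_congr
      intro s hs
      rw [Set.uIcc_of_le h.le] at hs
      show (if s < c then a else b) = b
      rw [if_neg (not_lt.2 hs.1)]
    rw [h1, h2, intervalIntegral.integral_const, intervalIntegral.integral_const,
      smul_eq_mul, smul_eq_mul]
    ring


/-- upper bound on the travel time of a DD robot: from any configuration
`(p, θ₀)` the point `q` is reachable within time `‖p-q‖/w_max + πρ/(2 w_max)`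
(rotate in place, then drive straight), so `τ_DD((p,θ₀),q)` is at most this quantity. -/
theorem dd_travel_time_upper_bound
    (wmax ρ : ℝ) (hw : 0 < wmax) (hρ : 0 < ρ) (p : Plane) (θ₀ : ℝ) (q : Plane) :
    (∃ T : ℝ, 0 ≤ T ∧ T ≤ ‖p - q‖ / wmax + π * ρ / (2 * wmax) ∧
      ∃ x y θ : ℝ → ℝ, IsDDTraj wmax ρ x y θ ∧
        x 0 = p 0 ∧ y 0 = p 1 ∧ θ 0 = θ₀ ∧ x T = q 0 ∧ y T = q 1) ∧
    tauDD wmax ρ p θ₀ q ≤ ‖p - q‖ / wmax + π * ρ / (2 * wmax) := by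
  have hπ : (0:ℝ) < π := Real.pi_pos
  have hB : 0 ≤ ‖p - q‖ / wmax + π * ρ / (2 * wmax) := by positivity
  have main : ∃ T : ℝ, 0 ≤ T ∧ T ≤ ‖p - q‖ / wmax + π * ρ / (2 * wmax) ∧
      ∃ x y θ : ℝ → ℝ, IsDDTraj wmax ρ x y θ ∧
        x 0 = p 0 ∧ y 0 = p 1 ∧ θ 0 = θ₀ ∧ x T = q 0 ∧ y T = q 1 := by
    by_cases hpq : p = q
    · refine ⟨0, le_refl 0, hB, fun _ => p 0, fun _ => p 1, fun _ => θ₀,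
        ⟨fun _ => 0, fun _ => 0, measurable_const, measurable_const,
          fun t => by simpa using hw.le, fun t => by simpa using hw.le,
          fun t => by simp, fun t => by simp, fun t => by simp⟩,
        rfl, rfl, rfl, by rw [hpq], by rw [hpq]⟩
    · have hd : 0 < ‖p - q‖ := by
        rw [norm_pos_iff]; exact sub_ne_zero.2 hpq
      set d : ℝ := ‖p - q‖ with hd'
      set z : ℂ := ⟨q 0 - p 0, q 1 - p 1⟩ with hz'
      have habs : ‖z‖ = d := by
        rw [Complex.norm_def, hz', Complex.normSq_mk, hd', EuclideanSpace.norm_eq]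
        congr 1
        rw [Fin.sum_univ_two]
        simp only [PiLp.sub_apply, Real.norm_eq_abs, sq_abs]
        ring
      have hz : z ≠ 0 := by
        intro h
        rw [h] at habs
        simp at habs
        exact absurd habs.symm hd.ne'
      set φ : ℝ := Complex.arg z with hφ'
      have hcos : Real.cos φ = (q 0 - p 0) / d := by
        rw [hφ', Complex.cos_arg hz, habs]
      have hsin : Real.sin φ = (q 1 - p 1) / d := by
        rw [hφ', Complex.sin_arg, habs]
      set k : ℤ := round ((φ - θ₀) / π) with hk'
      set δ : ℝ := (φ - θ₀) - k * π with hδ'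
      have hδle : |δ| ≤ π / 2 := by
        have h1 : |(φ - θ₀) / π - k| ≤ 1 / 2 := abs_sub_round _
        have hδeq : δ = ((φ - θ₀) / π - k) * π := by
          field_simp [hδ']
          ring
        rw [hδeq, abs_mul, abs_of_pos hπ]
        calc |(φ - θ₀) / π - ↑k| * π ≤ 1 / 2 * π :=
              mul_le_mul_of_nonneg_right h1 hπ.le
          _ = π / 2 := by ring
      set s : ℝ := (-1 : ℝ) ^ k with hs'
      have hss : s * s = 1 := by
        rcases Int.even_or_odd k with h | h
        · rw [hs', h.neg_one_zpow]; norm_num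
        · rw [hs', h.neg_one_zpow]; norm_num
      have hs1 : |s| = 1 := by
        rcases Int.even_or_odd k with h | h
        · rw [hs', h.neg_one_zpow]; norm_num
        · rw [hs', h.neg_one_zpow]; norm_num
      have hang : θ₀ + δ = -(k * π - φ) := by rw [hδ']; ring
      have hcosδ : Real.cos (θ₀ + δ) = s * ((q 0 - p 0) / d) := by
        rw [hang, Real.cos_neg, Real.cos_int_mul_pi_sub, hcos, hs']
      have hsinδ : Real.sin (θ₀ + δ) = s * ((q 1 - p 1) / d) := by
        rw [hang, Real.sin_neg, Real.sin_int_mul_pi_sub, hsin, hs']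
        ring
      set σ : ℝ := if δ < 0 then (-1 : ℝ) else 1 with hσ'
      have hσ1 : |σ| = 1 := by
        rw [hσ']; split <;> norm_num
      have hσδ : σ * |δ| = δ := by
        rw [hσ']
        rcases lt_or_ge δ 0 with h | h
        · rw [if_pos h, abs_of_neg h]; ring
        · rw [if_neg (not_lt.2 h), abs_of_nonneg h]; ring
      set t1 : ℝ := |δ| * ρ / wmax with ht1'
      have ht1 : 0 ≤ t1 := by positivity
      have hθ1 : σ * (wmax / ρ) * t1 = δ := by
        have h0 : σ * (wmax / ρ) * (|δ| * ρ / wmax) = σ * |δ| := by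
          field_simp
        rw [ht1', h0, hσδ]
      set T : ℝ := t1 + d / wmax with hT'
      have ht1T : t1 ≤ T := by
        rw [hT']
        have : 0 ≤ d / wmax := by positivity
        linarith
      set wl : ℝ → ℝ := fun t => if t < t1 then -σ * wmax else s * wmax with hwl'
      set wr : ℝ → ℝ := fun t => if t < t1 then σ * wmax else s * wmax with hwr'
      set θf : ℝ → ℝ := fun t => θ₀ + σ * (wmax / ρ) * min t t1 with hθf'
      have hθf0 : θf 0 = θ₀ := by
        rw [hθf']
        simp [min_eq_left ht1]
      -- integrand identities
      have hIθ : ∀ u : ℝ, (wr u - wl u) / (2 * ρ) =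
          if u < t1 then σ * (wmax / ρ) else 0 := by
        intro u
        rw [hwl', hwr']
        by_cases h : u < t1
        · rw [if_pos h]
          simp only [if_pos h]
          field_simp
          ring
        · rw [if_neg h]
          simp only [if_neg h]
          ring
      have hIx : ∀ u : ℝ, (wl u + wr u) / 2 * Real.cos (θf u) =
          if u < t1 then 0 else wmax * ((q 0 - p 0) / d) := by
        intro u
        rw [hwl', hwr', hθf']
        by_cases h : u < t1
        · rw [if_pos h]
          simp only [if_pos h]
          ring
        · rw [if_neg h]
          simp only [if_neg h, min_eq_right (not_lt.1 h)]
          rw [hθ1, hcosδ]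
          have : (s * wmax + s * wmax) / 2 * (s * ((q 0 - p 0) / d))
              = (s * s) * (wmax * ((q 0 - p 0) / d)) := by ring
          rw [this, hss, one_mul]
      have hIy : ∀ u : ℝ, (wl u + wr u) / 2 * Real.sin (θf u) =
          if u < t1 then 0 else wmax * ((q 1 - p 1) / d) := by
        intro u
        rw [hwl', hwr', hθf']
        by_cases h : u < t1
        · rw [if_pos h]
          simp only [if_pos h]
          ring
        · rw [if_neg h]
          simp only [if_neg h, min_eq_right (not_lt.1 h)]
          rw [hθ1, hsinδ]
          have : (s * wmax + s * wmax) / 2 * (s * ((q 1 - p 1) / d))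
              = (s * s) * (wmax * ((q 1 - p 1) / d)) := by ring
          rw [this, hss, one_mul]
      set xf : ℝ → ℝ := fun t => p 0 + ∫ u in (0:ℝ)..t, (wl u + wr u) / 2 * Real.cos (θf u)
        with hxf'
      set yf : ℝ → ℝ := fun t => p 1 + ∫ u in (0:ℝ)..t, (wl u + wr u) / 2 * Real.sin (θf u)
        with hyf'
      have hxf0 : xf 0 = p 0 := by rw [hxf']; simp
      have hyf0 : yf 0 = p 1 := by rw [hyf']; simp
      -- integral computations
      have hxval : ∀ t : ℝ, xf t = p 0 + wmax * ((q 0 - p 0) / d) * (t - min t t1) := by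
        intro t
        rw [hxf']
        simp only
        rw [intervalIntegral.integral_congr (fun u _ => hIx u),
          integral_step t1 0 (wmax * ((q 0 - p 0) / d)) t ht1]
        ring
      have hyval : ∀ t : ℝ, yf t = p 1 + wmax * ((q 1 - p 1) / d) * (t - min t t1) := by
        intro t
        rw [hyf']
        simp only
        rw [intervalIntegral.integral_congr (fun u _ => hIy u),
          integral_step t1 0 (wmax * ((q 1 - p 1) / d)) t ht1]
        ring
      have hxT : xf T = q 0 := by
        rw [hxval T, min_eq_right ht1T, hT']
        field_simp
        ring
      have hyT : yf T = q 1 := by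
        rw [hyval T, min_eq_right ht1T, hT']
        field_simp
        ring
      have hTbound : T ≤ d / wmax + π * ρ / (2 * wmax) := by
        rw [hT', ht1']
        have h1 : |δ| * ρ / wmax ≤ (π / 2) * ρ / wmax := by
          gcongr
        have h2 : (π / 2) * ρ / wmax = π * ρ / (2 * wmax) := by ring
        linarith
      refine ⟨T, le_trans ht1 ht1T, hTbound, xf, yf, θf,
        ⟨wl, wr, ?_, ?_, ?_, ?_, ?_, ?_, ?_⟩, hxf0, hyf0, hθf0, hxT, hyT⟩
      · rw [hwl']
        exact measurable_const.ite measurableSet_Iio measurable_const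
      · rw [hwr']
        exact measurable_const.ite measurableSet_Iio measurable_const
      · intro t
        rw [hwl']
        simp only
        split
        · rw [abs_mul, abs_neg, hσ1, one_mul, abs_of_pos hw]
        · rw [abs_mul, hs1, one_mul, abs_of_pos hw]
      · intro t
        rw [hwr']
        simp only
        split
        · rw [abs_mul, hσ1, one_mul, abs_of_pos hw]
        · rw [abs_mul, hs1, one_mul, abs_of_pos hw]
      · intro t
        rw [hxf0, hxf']
      · intro t
        rw [hyf0, hyf']
      · intro t
        rw [hθf0, hθf']
        simp only
        rw [intervalIntegral.integral_congr (fun u _ => hIθ u),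
          integral_step t1 (σ * (wmax / ρ)) 0 t ht1]
        ring
  refine ⟨main, ?_⟩
  obtain ⟨T, hT0, hTle, traj⟩ := main
  have hmem : T ∈ {T : ℝ | 0 ≤ T ∧ ∃ x y θ : ℝ → ℝ, IsDDTraj wmax ρ x y θ ∧
      x 0 = p 0 ∧ y 0 = p 1 ∧ θ 0 = θ₀ ∧ x T = q 0 ∧ y T = q 1} := ⟨hT0, traj⟩
  exact le_trans (csInf_le ⟨0, fun x hx => hx.1⟩ hmem) hTle
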